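/- With notation as in the previous statement (one Strang-splitting step of preconditioned HMC in finite dimensions), the following identity for the quadratic parts holds: ⟨q', C⁻¹ q'⟩ + ⟨v', C⁻¹ v'⟩ = ⟨q, C⁻¹ q⟩ + ⟨v, C⁻¹ v⟩ + (h²/4)(⟨DΦ(q), C DΦ(q)⟩ - ⟨DΦ(q'), C DΦ(q')⟩) - h(⟨v, DΦ(q)⟩ + ⟨v', DΦ(q')⟩). -/

import Mathlib

lemma aux_8 {H : Type*} [NormedAddCommGroup H] [InnerProductSpace ℝ H]
    (C invC : H →ₗ[ℝ] H)
    (hCsa : ∀ x y : H, (inner ℝ (C x) y : ℝ) = inner ℝ x (C y))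
    (hinv : ∀ x : H, invC (C x) = x) (hinv' : ∀ x : H, C (invC x) = x)
    (h : ℝ) (q v q' v' g g' : H)
    (hq' : q' = Real.cos h • q + Real.sin h • v - (h / 2 * Real.sin h) • C g)
    (hv' : v' = -(Real.sin h • q) + Real.cos h • v
      - (h / 2 * Real.cos h) • C g - (h / 2) • C g') :
    (inner ℝ q' (invC q') : ℝ) + (inner ℝ v' (invC v') : ℝ)
    = (inner ℝ q (invC q) : ℝ) + (inner ℝ v (invC v) : ℝ)
      + h ^ 2 / 4 * ((inner ℝ g (C g) : ℝ) - (inner ℝ g' (C g') : ℝ))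
      - h * ((inner ℝ v g : ℝ) + (inner ℝ v' g' : ℝ)) := by
  have hmix : ∀ x y : H, (inner ℝ (C x) (invC y) : ℝ) = inner ℝ x y := by
    intro x y
    rw [hCsa, hinv']
  have hsym : ∀ x y : H, (inner ℝ x (invC y) : ℝ) = inner ℝ y (invC x) := by
    intro x y
    conv_lhs => rw [← hinv' x, hCsa, hinv' y]
    exact real_inner_comm _ _
  subst hq' hv'
  simp only [inner_sub_left, inner_sub_right, inner_add_left, inner_add_right,
    inner_neg_left, inner_neg_right, real_inner_smul_left, real_inner_smul_right,
    map_add, map_sub, map_neg, map_smul, hinv, hmix, smul_eq_mul]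
  rw [hsym v q, real_inner_comm g q, real_inner_comm g v, real_inner_comm g' q,
    real_inner_comm g' v, hCsa g g, hCsa g' g', (hCsa g' g).trans (real_inner_comm (C g) g')]
  linear_combination (Real.sin_sq_add_cos_sq h) *
    ((inner ℝ q (invC q) : ℝ) + (inner ℝ v (invC v) : ℝ)
      + (h/2)^2 * (inner ℝ g (C g) : ℝ) - h * (inner ℝ v g : ℝ))
    - h * (Real.sin h^2 + Real.cos h^2 - 1) * (real_inner_comm v g)

theorem stmt_8 {H : Type*} [NormedAddCommGroup H] [InnerProductSpace ℝ H]
    [FiniteDimensional ℝ H]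
    (C invC : H →ₗ[ℝ] H)
    (hCsa : ∀ x y : H, (inner ℝ (C x) y : ℝ) = inner ℝ x (C y))
    (hCpos : ∀ x : H, x ≠ 0 → (0:ℝ) < inner ℝ (C x) x)
    (hinv : ∀ x : H, invC (C x) = x) (hinv' : ∀ x : H, C (invC x) = x)
    (Φ : H → ℝ) (hΦ : Differentiable ℝ Φ)
    (h : ℝ) (q v q' v' : H)
    (hq' : q' = Real.cos h • q + Real.sin h • v
      - (h / 2 * Real.sin h) • C (gradient Φ q))
    (hv' : v' = -(Real.sin h • q) + Real.cos h • v
      - (h / 2 * Real.cos h) • C (gradient Φ q) - (h / 2) • C (gradient Φ q')) :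
    (inner ℝ q' (invC q') : ℝ) + (inner ℝ v' (invC v') : ℝ)
    = (inner ℝ q (invC q) : ℝ) + (inner ℝ v (invC v) : ℝ)
      + h ^ 2 / 4 * ((inner ℝ (gradient Φ q) (C (gradient Φ q)) : ℝ)
          - (inner ℝ (gradient Φ q') (C (gradient Φ q')) : ℝ))
      - h * ((inner ℝ v (gradient Φ q) : ℝ) + (inner ℝ v' (gradient Φ q') : ℝ)) :=
  aux_8 C invC hCsa hinv hinv' h q v q' v' (gradient Φ q) (gradient Φ q') hq' hv'
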